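/- Let A and B be unital C*-algebras and let Φ : A → B be a completely positive linear map with operator norm ‖Φ‖ ≤ 1. Then the multiplicative domain M_Φ is a norm-closed star-subalgebra of A, the restriction of Φ to M_Φ is multiplicative (Φ(xy) = Φ(x)Φ(y) for all x, y ∈ M_Φ), and every star-subalgebra C of A on which Φ is multiplicative is contained in M_Φ; thus M_Φ is the largest C*-subalgebra of A on which Φ restricts to a *-homomorphism. -/

import Mathlib

open scoped Matrix

/-- A map between star rings is *completely positive* if, for every `n`, applying it
entrywise to `n × n` matrices sends positive elements (i.e. those of the form `Nᴴ * N`)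
of the matrix ring over the domain to positive elements of the matrix ring over the
codomain. -/
def CompletelyPositive {A B : Type*} [NonUnitalNonAssocSemiring A] [StarRing A]
    [NonUnitalNonAssocSemiring B] [StarRing B] (Φ : A → B) : Prop :=
  ∀ n : ℕ, ∀ M : Matrix (Fin n) (Fin n) A,
    (∃ N : Matrix (Fin n) (Fin n) A, M = Nᴴ * N) →
      ∃ P : Matrix (Fin n) (Fin n) B, M.map Φ = Pᴴ * P

/-- The *multiplicative domain* of a map `Φ` between C*-algebras:
`M_Φ = {a | Φ(a*a) = Φ(a)*Φ(a) and Φ(aa*) = Φ(a)Φ(a)*}`. -/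
def multDomain {A B : Type*} [NonUnitalNonAssocSemiring A] [StarRing A]
    [NonUnitalNonAssocSemiring B] [StarRing B] (Φ : A → B) : Set A :=
  {a | Φ (star a * a) = star (Φ a) * Φ a ∧ Φ (a * star a) = Φ a * star (Φ a)}

set_option linter.unusedSectionVars false

section helpers
variable {A B : Type*}
    [NormedRing A] [StarRing A] [CStarRing A] [CompleteSpace A]
    [NormedAlgebra ℂ A] [StarModule ℂ A]
    [NormedRing B] [StarRing B] [CStarRing B] [CompleteSpace B]
    [NormedAlgebra ℂ B] [StarModule ℂ B]

variable [PartialOrder B] [StarOrderedRing B]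

lemma cp_pos (Φ : A →L[ℂ] B) (hcp : CompletelyPositive (⇑Φ)) (c : A) :
    0 ≤ Φ (star c * c) := by
  obtain ⟨P, hP⟩ := hcp 1 (fun _ _ => star c * c) ⟨(fun _ _ => c), by
    ext i j
    show star c * c = ∑ _k : Fin 1, star c * c
    simp⟩
  have := congrFun (congrFun hP 0) 0
  simp only [Matrix.map_apply, Matrix.mul_apply, Matrix.conjTranspose_apply,
    Fin.sum_univ_one] at this
  rw [show Φ (star c * c) = star (P 0 0) * P 0 0 from this]
  exact star_mul_self_nonneg _

end helpers


section helpers2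
variable {A B : Type*}
    [NormedRing A] [StarRing A] [CStarRing A] [CompleteSpace A]
    [NormedAlgebra ℂ A] [StarModule ℂ A]
    [NormedRing B] [StarRing B] [CStarRing B] [CompleteSpace B]
    [NormedAlgebra ℂ B] [StarModule ℂ B]
    [PartialOrder A] [StarOrderedRing A]
    [PartialOrder B] [StarOrderedRing B]

lemma cp_nonneg (Φ : A →L[ℂ] B) (hcp : CompletelyPositive (⇑Φ)) {a : A} (ha : 0 ≤ a) :
    0 ≤ Φ a := by
  letI : CStarAlgebra A := {}
  have h := CFC.sqrt_mul_sqrt_self a ha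
  have hsa : IsSelfAdjoint (CFC.sqrt a) := IsSelfAdjoint.of_nonneg (CFC.sqrt_nonneg _)
  have h2 : a = star (CFC.sqrt a) * CFC.sqrt a := by rw [hsa.star_eq, h]
  rw [h2]
  exact cp_pos Φ hcp _

lemma algMapMono {r s : ℝ} (h : r ≤ s) : algebraMap ℝ B r ≤ algebraMap ℝ B s := by
  rw [← sub_nonneg, ← map_sub]
  have key : algebraMap ℝ B (s - r)
      = star (algebraMap ℝ B (Real.sqrt (s - r))) * algebraMap ℝ B (Real.sqrt (s - r)) := by
    have : star (algebraMap ℝ B (Real.sqrt (s - r))) = algebraMap ℝ B (Real.sqrt (s - r)) := by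
      rw [Algebra.algebraMap_eq_smul_one, star_smul, star_trivial, star_one]
    rw [this, ← map_mul, Real.mul_self_sqrt (by linarith)]
  rw [key]
  exact star_mul_self_nonneg _

lemma cp_star_map (Φ : A →L[ℂ] B) (hcp : CompletelyPositive (⇑Φ)) (x : A) :
    Φ (star x) = star (Φ x) := by
  letI : CStarAlgebra A := {}
  letI : CStarAlgebra B := {}
  have hsa : ∀ a : A, IsSelfAdjoint a → IsSelfAdjoint (Φ a) := by
    intro a ha
    set m : A := algebraMap ℝ A ‖a‖ with hm
    have hm0 : (0 : A) ≤ m := by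
      simpa using algMapMono (B := A) (norm_nonneg a)
    have h1 : (0 : A) ≤ m + a := by
      have h := ha.neg_algebraMap_norm_le_self
      rw [← hm] at h
      have := add_le_add_right h m
      simpa [add_comm] using this
    have h2 : (0 : A) ≤ m - a := by
      have h := ha.le_algebraMap_norm_self
      rw [← hm] at h
      exact sub_nonneg.mpr h
    have key : Φ a = Φ (m + a) - Φ m := by rw [map_add]; abel
    have hsa1 : IsSelfAdjoint (Φ (m + a)) := IsSelfAdjoint.of_nonneg (cp_nonneg Φ hcp h1)
    have hsa2 : IsSelfAdjoint (Φ m) := IsSelfAdjoint.of_nonneg (cp_nonneg Φ hcp hm0)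
    rw [key]
    exact hsa1.sub hsa2
  have hre : IsSelfAdjoint (Φ (realPart x : A)) := hsa _ (realPart x).2
  have him : IsSelfAdjoint (Φ (imaginaryPart x : A)) := hsa _ (imaginaryPart x).2
  have hx := realPart_add_I_smul_imaginaryPart x
  calc Φ (star x) = Φ (star (↑(realPart x) + Complex.I • ↑(imaginaryPart x))) := by rw [hx]
    _ = Φ (realPart x) - Complex.I • Φ (imaginaryPart x) := by
        rw [star_add, star_smul, (realPart x).2.star_eq, (imaginaryPart x).2.star_eq]
        rw [map_add, map_smul]
        simp [Complex.star_def, Complex.conj_I, sub_eq_add_neg]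
    _ = star (Φ x) := by
        conv_rhs => rw [← hx]
        rw [map_add, map_smul, star_add, star_smul]
        simp [hre.star_eq, him.star_eq, Complex.star_def, Complex.conj_I, sub_eq_add_neg]

end helpers2

section helpers3
variable {A B : Type*}
    [NormedRing A] [StarRing A] [CStarRing A] [CompleteSpace A]
    [NormedAlgebra ℂ A] [StarModule ℂ A]
    [NormedRing B] [StarRing B] [CStarRing B] [CompleteSpace B]
    [NormedAlgebra ℂ B] [StarModule ℂ B]
    [PartialOrder A] [StarOrderedRing A]
    [PartialOrder B] [StarOrderedRing B]

lemma cp_one_le (Φ : A →L[ℂ] B) (hnorm : ‖Φ‖ ≤ 1) (hcp : CompletelyPositive (⇑Φ)) :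
    Φ 1 ≤ 1 := by
  letI : CStarAlgebra B := {}
  rcases subsingleton_or_nontrivial A with hA | hA
  · have : (1 : A) = 0 := Subsingleton.elim _ _
    rw [this, map_zero]
    simpa using star_mul_self_nonneg (1 : B)
  · have hpos : (0 : B) ≤ Φ 1 := by simpa using cp_pos Φ hcp 1
    have hsa : IsSelfAdjoint (Φ 1) := IsSelfAdjoint.of_nonneg hpos
    have hn : ‖Φ 1‖ ≤ 1 := by
      calc ‖Φ 1‖ ≤ ‖Φ‖ * ‖(1 : A)‖ := Φ.le_opNorm 1
        _ = ‖Φ‖ := by rw [norm_one, mul_one]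
        _ ≤ 1 := hnorm
    calc Φ 1 ≤ algebraMap ℝ B ‖Φ 1‖ := hsa.le_algebraMap_norm_self
      _ ≤ algebraMap ℝ B 1 := algMapMono hn
      _ = 1 := map_one _

lemma cp_schwarz (Φ : A →L[ℂ] B) (hnorm : ‖Φ‖ ≤ 1) (hcp : CompletelyPositive (⇑Φ))
    (a : A) : star (Φ a) * Φ a ≤ Φ (star a * a) := by
  obtain ⟨P, hP⟩ := hcp 2 (!![(1 : A), a; 0, 0]ᴴ * !![(1 : A), a; 0, 0]) ⟨_, rfl⟩
  set p := P 0 0 with hp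
  set q := P 0 1 with hq
  set r := P 1 0 with hr
  set s := P 1 1 with hs
  have h1 : Φ 1 = star p * p + star r * r := by
    have := congrFun (congrFun hP 0) 0
    simpa [Matrix.mul_apply, Fin.sum_univ_two, Matrix.conjTranspose_apply,
      Matrix.map_apply] using this
  have h2 : Φ a = star p * q + star r * s := by
    have := congrFun (congrFun hP 0) 1
    simpa [Matrix.mul_apply, Fin.sum_univ_two, Matrix.conjTranspose_apply,
      Matrix.map_apply] using this
  have h3 : Φ (star a * a) = star q * q + star s * s := by
    have := congrFun (congrFun hP 1) 1
    simpa [Matrix.mul_apply, Fin.sum_univ_two, Matrix.conjTranspose_apply,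
      Matrix.map_apply] using this
  set b := Φ a with hb
  have key : (0 : B) ≤ star (p * b - q) * (p * b - q) + star (r * b - s) * (r * b - s) :=
    add_nonneg (star_mul_self_nonneg _) (star_mul_self_nonneg _)
  have expand : star (p * b - q) * (p * b - q) + star (r * b - s) * (r * b - s)
      = star b * Φ 1 * b - star b * b - star b * b + Φ (star a * a) := by
    rw [h1, h3, h2]
    simp only [star_add, star_sub, star_mul, star_star]
    noncomm_ring
  rw [expand] at key
  have hconj : star b * Φ 1 * b ≤ star b * b := by
    have := star_left_conjugate_le_conjugate (cp_one_le Φ hnorm hcp) b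
    rwa [mul_one] at this
  have h5 : star b * Φ 1 * b - star b * b ≤ 0 := sub_nonpos.mpr hconj
  have h6 : (0 : B) ≤ (star b * Φ 1 * b - star b * b) + (Φ (star a * a) - star b * b) := by
    convert key using 1
    abel
  have h7 : (star b * Φ 1 * b - star b * b) + (Φ (star a * a) - star b * b)
      ≤ 0 + (Φ (star a * a) - star b * b) := add_le_add_left h5 _
  rw [zero_add] at h7
  exact sub_nonneg.mp (h6.trans h7)

end helpers3

section helpers4
variable {A B : Type*}
    [NormedRing A] [StarRing A] [CStarRing A] [CompleteSpace A]
    [NormedAlgebra ℂ A] [StarModule ℂ A]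
    [NormedRing B] [StarRing B] [CStarRing B] [CompleteSpace B]
    [NormedAlgebra ℂ B] [StarModule ℂ B]
    [PartialOrder A] [StarOrderedRing A]
    [PartialOrder B] [StarOrderedRing B]

lemma csmul_nonneg {r : ℝ} (hr : 0 ≤ r) {x : B} (hx : 0 ≤ x) :
    0 ≤ ((r : ℂ)) • x := by
  letI : CStarAlgebra B := {}
  have h := CFC.sqrt_mul_sqrt_self x hx
  have hsa : IsSelfAdjoint (CFC.sqrt x) := IsSelfAdjoint.of_nonneg (CFC.sqrt_nonneg _)
  have key : ((r : ℂ)) • x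
      = star (((Real.sqrt r : ℂ)) • CFC.sqrt x) * (((Real.sqrt r : ℂ)) • CFC.sqrt x) := by
    rw [star_smul, hsa.star_eq, smul_mul_smul_comm, h, Complex.star_def, Complex.conj_ofReal,
      ← Complex.ofReal_mul, Real.mul_self_sqrt hr]
  rw [key]
  exact star_mul_self_nonneg _

lemma cp_Tzero (Φ : A →L[ℂ] B) (hnorm : ‖Φ‖ ≤ 1) (hcp : CompletelyPositive (⇑Φ))
    {a : A} (ha : Φ (star a * a) = star (Φ a) * Φ a) (b : A) :
    Φ (star a * b) = star (Φ a) * Φ b := by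
  letI : CStarAlgebra B := {}
  set T : A → A → B := fun x y => Φ (star x * y) - star (Φ x) * Φ y with hT
  have hpos : ∀ x, 0 ≤ T x x := fun x => sub_nonneg.mpr (cp_schwarz Φ hnorm hcp x)
  have h0 : T a a = 0 := by simp [hT, ha]
  have hexp : ∀ (c : ℂ) (y : A), T (a + c • y) (a + c • y)
      = c • T a y + (starRingEnd ℂ c) • T y a + (c * (starRingEnd ℂ c)) • T y y := by
    intro c y
    have e1 : star (a + c • y) * (a + c • y)
        = star a * a + c • (star a * y) + (starRingEnd ℂ c) • (star y * a)
          + (c * (starRingEnd ℂ c)) • (star y * y) := by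
      rw [star_add, star_smul, add_mul, mul_add, mul_add]
      simp only [smul_mul_assoc, mul_smul_comm, smul_smul, Complex.star_def,
        mul_comm ((starRingEnd ℂ) c) c]
      abel
    have e2 : star (Φ a + c • Φ y) * (Φ a + c • Φ y)
        = star (Φ a) * Φ a + c • (star (Φ a) * Φ y) + (starRingEnd ℂ c) • (star (Φ y) * Φ a)
          + (c * (starRingEnd ℂ c)) • (star (Φ y) * Φ y) := by
      rw [star_add, star_smul, add_mul, mul_add, mul_add]
      simp only [smul_mul_assoc, mul_smul_comm, smul_smul, Complex.star_def,
        mul_comm ((starRingEnd ℂ) c) c]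
      abel
    simp only [hT]
    rw [e1, map_add, map_add, map_add, map_smul, map_smul, map_smul, map_add, map_smul, e2,
      ha]
    simp only [smul_sub]
    abel
  -- key: for every y, 0 ≤ T a y + T y a
  have hkey : ∀ y : A, 0 ≤ T a y + T y a := by
    intro y
    set u := T a y + T y a with hu
    set d := T y y with hd
    have step : ∀ t : ℝ, 0 < t → 0 ≤ u + ((t : ℂ)) • d := by
      intro t ht
      have h := hpos (a + ((t : ℂ)) • y)
      rw [hexp] at h
      have hconv : ((t:ℂ)) • T a y + (starRingEnd ℂ (t:ℂ)) • T y a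
          + ((t:ℂ) * (starRingEnd ℂ (t:ℂ))) • T y y
          = ((t:ℂ)) • (u + ((t : ℂ)) • d) := by
        rw [Complex.conj_ofReal, hu, hd]
        simp only [smul_add, smul_smul]
      rw [hconv] at h
      have := csmul_nonneg (B := B) (r := t⁻¹) (by positivity) h
      rwa [smul_smul, ← Complex.ofReal_mul, inv_mul_cancel₀ ht.ne', Complex.ofReal_one,
        one_smul] at this
    have htend : Filter.Tendsto (fun n : ℕ => u + ((((n : ℝ) + 1)⁻¹ : ℝ) : ℂ) • d)
        Filter.atTop (nhds u) := by
      have h1 : Filter.Tendsto (fun n : ℕ => (((n : ℝ) + 1)⁻¹ : ℝ)) Filter.atTop (nhds 0) :=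
        tendsto_one_div_add_atTop_nhds_zero_nat.congr (by simp [one_div])
      have h2 : Filter.Tendsto (fun n : ℕ => ((((n : ℝ) + 1)⁻¹ : ℝ) : ℂ)) Filter.atTop
          (nhds 0) := by
        have := (Complex.continuous_ofReal.tendsto 0).comp h1
        simpa [Function.comp_def] using this
      have h3 := h2.smul_const d
      rw [zero_smul] at h3
      simpa using (tendsto_const_nhds (x := u)).add h3
    have hmem : ∀ n : ℕ, u + ((((n : ℝ) + 1)⁻¹ : ℝ) : ℂ) • d ∈ {x : B | 0 ≤ x} :=
      fun n => step _ (by positivity)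
    exact CStarAlgebra.isClosed_nonneg.mem_of_tendsto htend (Filter.Eventually.of_forall hmem)
  have hlin : ∀ (c : ℂ) (y : A), T a (c • y) = c • T a y ∧ T (c • y) a = (starRingEnd ℂ c) • T y a := by
    intro c y
    constructor
    · simp only [hT, mul_smul_comm, map_smul, smul_sub]
    · simp only [hT, star_smul, smul_mul_assoc, map_smul, Complex.star_def, smul_sub]
  -- apply hkey to y = b, -b, I • b, -(I • b)
  have k1 := hkey b
  have k2 := hkey (-b)
  have k3 := hkey (Complex.I • b)
  have k4 := hkey (-(Complex.I • b))
  have hneg : ∀ y : A, T a (-y) = - T a y ∧ T (-y) a = - T y a := by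
    intro y
    constructor
    · simp only [hT, mul_neg, map_neg, star_neg, neg_mul]
      abel
    · simp only [hT, star_neg, neg_mul, map_neg]
      abel
  rw [(hneg b).1, (hneg b).2] at k2
  have e0 : T a b + T b a = 0 := by
    have : -(T a b + T b a) = -T a b + -T b a := by abel
    refine le_antisymm ?_ k1
    rw [← neg_nonneg, this]
    exact k2
  rw [(hlin Complex.I b).1, (hlin Complex.I b).2] at k3
  rw [(hneg (Complex.I • b)).1, (hneg (Complex.I • b)).2, (hlin Complex.I b).1,
    (hlin Complex.I b).2] at k4
  have e1 : Complex.I • T a b + (starRingEnd ℂ Complex.I) • T b a = 0 := by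
    refine le_antisymm ?_ k3
    rw [← neg_nonneg]
    have : -(Complex.I • T a b + (starRingEnd ℂ Complex.I) • T b a)
        = -(Complex.I • T a b) + -((starRingEnd ℂ Complex.I) • T b a) := by abel
    rw [this]
    exact k4
  -- from e1 : I • T a b - I • T b a = 0, so T a b = T b a
  have e2 : T a b = T b a := by
    have h1 : Complex.I • (T a b - T b a) = 0 := by
      rw [smul_sub]
      rw [Complex.conj_I] at e1
      rw [neg_smul] at e1
      linear_combination (norm := abel) e1
    have h2 := congrArg (fun z => (-Complex.I) • z) h1
    simp only [smul_smul, smul_zero] at h2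
    rw [neg_mul, Complex.I_mul_I, neg_neg, one_smul, sub_eq_zero] at h2
    exact h2
  have e3 : T a b = 0 := by
    rw [← e2] at e0
    have h2 : (2 : ℂ) • T a b = 0 := by rw [two_smul]; exact e0
    have h3 := congrArg (fun z => ((2 : ℂ)⁻¹) • z) h2
    simp only [smul_smul, smul_zero] at h3
    norm_num at h3
    exact h3
  have h4 : Φ (star a * b) - star (Φ a) * Φ b = 0 := by simpa [hT] using e3
  exact sub_eq_zero.mp h4
end helpers4

section helpers5
variable {A B : Type*}
    [NormedRing A] [StarRing A] [CStarRing A] [CompleteSpace A]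
    [NormedAlgebra ℂ A] [StarModule ℂ A]
    [NormedRing B] [StarRing B] [CStarRing B] [CompleteSpace B]
    [NormedAlgebra ℂ B] [StarModule ℂ B]
    [PartialOrder A] [StarOrderedRing A]
    [PartialOrder B] [StarOrderedRing B]

lemma memL (Φ : A →L[ℂ] B) (hnorm : ‖Φ‖ ≤ 1) (hcp : CompletelyPositive (⇑Φ))
    {a : A} (ha : a ∈ multDomain (⇑Φ)) :
    (∀ b, Φ (star a * b) = star (Φ a) * Φ b) ∧ (∀ b, Φ (a * b) = Φ a * Φ b) ∧
    (∀ b, Φ (b * a) = Φ b * Φ a) ∧ (∀ b, Φ (b * star a) = Φ b * star (Φ a)) := by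
  have hstar := cp_star_map Φ hcp
  have L1 : ∀ b, Φ (star a * b) = star (Φ a) * Φ b := cp_Tzero Φ hnorm hcp ha.1
  have ha2 : Φ (star (star a) * star a) = star (Φ (star a)) * Φ (star a) := by
    rw [star_star, hstar, star_star, ha.2]
  have L2 : ∀ b, Φ (a * b) = Φ a * Φ b := by
    intro b
    have := cp_Tzero Φ hnorm hcp ha2 b
    rwa [star_star, hstar, star_star] at this
  refine ⟨L1, L2, ?_, ?_⟩
  · intro b
    have h := L1 (star b)
    calc Φ (b * a) = star (Φ (star (b * a))) := by rw [hstar, star_star]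
      _ = star (Φ (star a * star b)) := by rw [star_mul]
      _ = star (star (Φ a) * Φ (star b)) := by rw [h]
      _ = Φ b * Φ a := by rw [star_mul, star_star, hstar, star_star]
  · intro b
    have h := L2 (star b)
    calc Φ (b * star a) = star (Φ (star (b * star a))) := by rw [hstar, star_star]
      _ = star (Φ (a * star b)) := by rw [star_mul, star_star]
      _ = star (Φ a * Φ (star b)) := by rw [h]
      _ = Φ b * star (Φ a) := by rw [star_mul, hstar, star_star]

end helpers5

/-- **The multiplicative domain theorem (Choi).** For a contractive completely positive
linear map `Φ : A → B` between unital C*-algebras, the multiplicative domain `M_Φ` is a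
norm-closed star-subalgebra of `A`, the restriction of `Φ` to `M_Φ` is multiplicative, and
every star-subalgebra of `A` on which `Φ` is multiplicative is contained in `M_Φ`; thus
`M_Φ` is the largest C*-subalgebra of `A` on which `Φ` restricts to a *-homomorphism. -/
theorem multDomain_largest_subalgebra {A B : Type*}
    [NormedRing A] [StarRing A] [CStarRing A] [CompleteSpace A]
    [NormedAlgebra ℂ A] [StarModule ℂ A]
    [NormedRing B] [StarRing B] [CStarRing B] [CompleteSpace B]
    [NormedAlgebra ℂ B] [StarModule ℂ B]
    (Φ : A →L[ℂ] B) (hnorm : ‖Φ‖ ≤ 1) (hcp : CompletelyPositive (⇑Φ)) :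
    IsClosed (multDomain (⇑Φ)) ∧
    (0 : A) ∈ multDomain (⇑Φ) ∧
    (∀ x ∈ multDomain (⇑Φ), ∀ y ∈ multDomain (⇑Φ), x + y ∈ multDomain (⇑Φ)) ∧
    (∀ (c : ℂ), ∀ x ∈ multDomain (⇑Φ), c • x ∈ multDomain (⇑Φ)) ∧
    (∀ x ∈ multDomain (⇑Φ), ∀ y ∈ multDomain (⇑Φ), x * y ∈ multDomain (⇑Φ)) ∧
    (∀ x ∈ multDomain (⇑Φ), star x ∈ multDomain (⇑Φ)) ∧
    (∀ x ∈ multDomain (⇑Φ), ∀ y ∈ multDomain (⇑Φ), Φ (x * y) = Φ x * Φ y) ∧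
    (∀ C : Set A, (∀ x ∈ C, star x ∈ C) → (∀ x ∈ C, ∀ y ∈ C, x * y ∈ C) →
      (∀ x ∈ C, ∀ y ∈ C, Φ (x * y) = Φ x * Φ y) → C ⊆ multDomain (⇑Φ)) := by
  letI : CStarAlgebra A := {}
  letI : CStarAlgebra B := {}
  letI : PartialOrder A := CStarAlgebra.spectralOrder A
  haveI : StarOrderedRing A := CStarAlgebra.spectralOrderedRing A
  letI : PartialOrder B := CStarAlgebra.spectralOrder B
  haveI : StarOrderedRing B := CStarAlgebra.spectralOrderedRing B
  have hstar := cp_star_map Φ hcp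
  have hmem : ∀ {a : A}, a ∈ multDomain (⇑Φ) →
      (∀ b, Φ (star a * b) = star (Φ a) * Φ b) ∧ (∀ b, Φ (a * b) = Φ a * Φ b) ∧
      (∀ b, Φ (b * a) = Φ b * Φ a) ∧ (∀ b, Φ (b * star a) = Φ b * star (Φ a)) :=
    fun ha => memL Φ hnorm hcp ha
  refine ⟨?_, ?_, ?_, ?_, ?_, ?_, ?_, ?_⟩
  · -- closed
    have heq : multDomain (⇑Φ) = {a : A | Φ (star a * a) = star (Φ a) * Φ a}
        ∩ {a : A | Φ (a * star a) = Φ a * star (Φ a)} := rfl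
    rw [heq]
    have c1 : Continuous fun a : A => Φ (star a * a) :=
      Φ.continuous.comp (continuous_star.mul continuous_id)
    have c2 : Continuous fun a : A => star (Φ a) * Φ a :=
      (Φ.continuous.star).mul Φ.continuous
    have c3 : Continuous fun a : A => Φ (a * star a) :=
      Φ.continuous.comp (continuous_id.mul continuous_star)
    have c4 : Continuous fun a : A => Φ a * star (Φ a) :=
      Φ.continuous.mul (Φ.continuous.star)
    exact (isClosed_eq c1 c2).inter (isClosed_eq c3 c4)
  · -- zero
    constructor <;> simp
  · -- add
    intro x hx y hy
    obtain ⟨x1, x2, x3, x4⟩ := hmem hx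
    obtain ⟨y1, y2, y3, y4⟩ := hmem hy
    constructor
    · show Φ (star (x + y) * (x + y)) = star (Φ (x + y)) * Φ (x + y)
      simp only [star_add, add_mul, mul_add, map_add, x1, y1]
    · show Φ ((x + y) * star (x + y)) = Φ (x + y) * star (Φ (x + y))
      simp only [star_add, add_mul, mul_add, map_add, x4, y4]
  · -- smul
    intro c x hx
    constructor
    · show Φ (star (c • x) * (c • x)) = star (Φ (c • x)) * Φ (c • x)
      simp only [star_smul, smul_mul_assoc, mul_smul_comm, smul_smul, map_smul,
        Complex.star_def, hx.1]
    · show Φ ((c • x) * star (c • x)) = Φ (c • x) * star (Φ (c • x))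
      simp only [star_smul, smul_mul_assoc, mul_smul_comm, smul_smul, map_smul,
        Complex.star_def, hx.2]
  · -- mul
    intro x hx y hy
    obtain ⟨x1, x2, x3, x4⟩ := hmem hx
    obtain ⟨y1, y2, y3, y4⟩ := hmem hy
    constructor
    · show Φ (star (x * y) * (x * y)) = star (Φ (x * y)) * Φ (x * y)
      have e : star (x * y) * (x * y) = star y * (star x * (x * y)) := by
        rw [star_mul, mul_assoc]
      rw [e, y1, x1, x2, star_mul]
      simp [mul_assoc]
    · show Φ ((x * y) * star (x * y)) = Φ (x * y) * star (Φ (x * y))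
      have e : (x * y) * star (x * y) = x * (y * (star y * star x)) := by
        rw [star_mul, mul_assoc]
      rw [e, x2, y2, y1, hstar, x2, star_mul]
      simp [mul_assoc]
  · -- star
    intro x hx
    constructor
    · show Φ (star (star x) * star x) = star (Φ (star x)) * Φ (star x)
      simp only [star_star, hstar]
      exact hx.2
    · show Φ (star x * star (star x)) = Φ (star x) * star (Φ (star x))
      simp only [star_star, hstar]
      exact hx.1
  · -- multiplicative
    intro x hx y hy
    exact (hmem hx).2.1 y
  · -- largest
    intro C hCstar hCmul hCmult x hxC
    constructor
    · rw [hCmult (star x) (hCstar x hxC) x hxC, hstar]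
    · rw [hCmult x hxC (star x) (hCstar x hxC), hstar]
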